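/- arXiv:1503.01575 — 2 statements merged into one kernel-verified Lean document; each statement's English description precedes it below -/
import Mathlib

section
/- Let G be a tournament on n ≥ 2 vertices with adjacency matrix A and Seidel matrix S = i(A − Aᵀ), whose distinct eigenvalues are τ_1 < ⋯ < τ_s with multiplicities m_i and main angles β_i. If β_1 ≠ 0 and m_1 > 1, then Rep(G) = n − m_1, and G admits a representation in Ω(n − m_1) with angle α = −i/τ_1. -/
open Matrix
open scoped Classical

noncomputable def eigSp {V : Type*} [Fintype V] [DecidableEq V]
    (H : Matrix V V ℂ) (μ : ℝ) : Submodule ℂ (EuclideanSpace ℂ V) :=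
  LinearMap.ker (Matrix.toEuclideanLin H - (μ : ℂ) • LinearMap.id)

noncomputable def mainAngle {V : Type*} [Fintype V] [DecidableEq V]
    (H : Matrix V V ℂ) (μ : ℝ) : ℝ :=
  (1 / Real.sqrt (Fintype.card V)) *
    ‖((eigSp H μ).orthogonalProjectionOnto (WithLp.toLp 2 (fun _ => 1)) : EuclideanSpace ℂ V)‖

noncomputable def eigMult {V : Type*} [Fintype V] [DecidableEq V]
    (H : Matrix V V ℂ) (μ : ℝ) : ℕ :=
  Module.finrank ℂ (eigSp H μ)

/-- `A` is the adjacency matrix of a tournament: a (0,1)-matrix with `A + Aᵀ = J - I`. -/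
def IsTournament {V : Type*} [Fintype V] [DecidableEq V] (A : Matrix V V ℂ) : Prop :=
  (∀ i j, A i j = 0 ∨ A i j = 1) ∧
    A + Aᵀ = Matrix.of (fun _ _ => (1 : ℂ)) - 1

/-- `φ` is a representation of the tournament with adjacency matrix `A` in `Ω(d)`,
with angle `α` (Im α > 0). -/
def IsRepresentation {n d : ℕ} (A : Matrix (Fin n) (Fin n) ℂ) (α : ℂ)
    (φ : Fin n → EuclideanSpace ℂ (Fin d)) : Prop :=
  0 < α.im ∧ (∀ x, ‖φ x‖ = 1) ∧
    ∀ x y : Fin n, x ≠ y →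
      (A x y = 1 → (inner ℂ (φ x) (φ y) : ℂ) = α) ∧
      (A y x = 1 → (inner ℂ (φ x) (φ y) : ℂ) = (starRingEnd ℂ) α)

def Representable {n : ℕ} (A : Matrix (Fin n) (Fin n) ℂ) (d : ℕ) : Prop :=
  ∃ (α : ℂ) (φ : Fin n → EuclideanSpace ℂ (Fin d)), IsRepresentation A α φ

noncomputable def RepDim {n : ℕ} (A : Matrix (Fin n) (Fin n) ℂ) : ℕ :=
  sInf {d | Representable A d}

/-- doubly regular tournament -/
def IsDoublyRegular {V : Type*} [Fintype V] [DecidableEq V] (A : Matrix V V ℂ) : Prop :=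
  IsTournament A ∧
    A *ᵥ (fun _ => 1) = (fun _ => ((Fintype.card V : ℂ) - 1) / 2) ∧
    A * Aᵀ = (((Fintype.card V : ℂ) + 1) / 4) • 1 +
      (((Fintype.card V : ℂ) - 3) / 4) • Matrix.of (fun _ _ => (1 : ℂ))

/-- skew Hadamard matrix -/
def IsSkewHadamard {V : Type*} [Fintype V] [DecidableEq V] (H : Matrix V V ℂ) : Prop :=
  (∀ i j, H i j = 1 ∨ H i j = -1) ∧
    H + Hᵀ = (2 : ℂ) • 1 ∧ H * Hᵀ = (Fintype.card V : ℂ) • 1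

/-- 2-code -/
def IsTwoCode {d : ℕ} (X : Finset (EuclideanSpace ℂ (Fin d))) (α : ℂ) : Prop :=
  α.im ≠ 0 ∧ (∀ x ∈ X, ‖x‖ = 1) ∧
    {z : ℂ | ∃ x ∈ X, ∃ y ∈ X, x ≠ y ∧ (inner ℂ x y : ℂ) = z} = {α, (starRingEnd ℂ) α}

/-- adjacency matrix of a 2-code -/
noncomputable def codeAdj {d : ℕ} (X : Finset (EuclideanSpace ℂ (Fin d))) (α : ℂ) :
    Matrix {x // x ∈ X} {x // x ∈ X} ℂ :=
  Matrix.of fun x y =>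
    if (x : EuclideanSpace ℂ (Fin d)) ≠ (y : EuclideanSpace ℂ (Fin d)) ∧
        (inner ℂ (x : EuclideanSpace ℂ (Fin d)) (y : EuclideanSpace ℂ (Fin d)) : ℂ) = α
    then 1 else 0

section aux
variable {n : ℕ} (A : Matrix (Fin n) (Fin n) ℂ)

lemma tourn_diag (hA : IsTournament A) (x : Fin n) : A x x = 0 := by
  have := congrFun (congrFun hA.2 x) x
  simp [Matrix.one_apply] at this
  have h2 : A x x + A x x = 0 := by simpa using this
  linear_combination h2 / 2

lemma tourn_off (hA : IsTournament A) {x y : Fin n} (hxy : x ≠ y) :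
    (A x y = 1 ∧ A y x = 0) ∨ (A x y = 0 ∧ A y x = 1) := by
  have := congrFun (congrFun hA.2 x) y
  simp [Matrix.one_apply, hxy] at this
  rcases hA.1 x y with h1 | h1 <;> rcases hA.1 y x with h2 | h2 <;>
    simp [h1, h2] at this ⊢ <;> norm_num at this

lemma seidel_entry {S : Matrix (Fin n) (Fin n) ℂ} (hS : S = Complex.I • (A - Aᵀ)) (x y : Fin n) :
    S x y = Complex.I * (A x y - A y x) := by
  subst hS; simp

lemma seidel_herm (hA : IsTournament A) {S : Matrix (Fin n) (Fin n) ℂ}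
    (hS : S = Complex.I • (A - Aᵀ)) : S.IsHermitian := by
  have hreal : ∀ x y, (starRingEnd ℂ) (A x y) = A x y := by
    intro x y; rcases hA.1 x y with h | h <;> simp [h]
  ext x y
  simp only [conjTranspose_apply, seidel_entry A hS, star_mul', star_sub]
  simp only [Complex.star_def, Complex.conj_I]
  rw [show (starRingEnd ℂ) (A y x) = A y x from hreal y x,
      show (starRingEnd ℂ) (A x y) = A x y from hreal x y]
  ring
end aux

section spec
variable {n : ℕ} {S : Matrix (Fin n) (Fin n) ℂ} (hh : S.IsHermitian)

lemma mem_eigSp {μ : ℝ} {v : EuclideanSpace ℂ (Fin n)} :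
    v ∈ eigSp S μ ↔ Matrix.toEuclideanLin S v = (μ : ℂ) • v := by
  simp [eigSp, LinearMap.mem_ker, sub_eq_zero]

lemma Teig (i : Fin n) :
    Matrix.toEuclideanLin S (hh.eigenvectorBasis i) =
      ((hh.eigenvalues i : ℝ) : ℂ) • hh.eigenvectorBasis i := by
  have := hh.mulVec_eigenvectorBasis i
  ext x
  have := congrFun this x
  simpa [Matrix.toEuclideanLin_apply] using this

lemma Texpand (v : EuclideanSpace ℂ (Fin n)) :
    Matrix.toEuclideanLin S v =
      ∑ i, (((hh.eigenvalues i : ℝ) : ℂ) * (inner ℂ (hh.eigenvectorBasis i) v : ℂ)) •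
        hh.eigenvectorBasis i := by
  conv_lhs => rw [← hh.eigenvectorBasis.sum_repr v]
  rw [map_sum]
  refine Finset.sum_congr rfl fun i _ => ?_
  rw [_root_.map_smul, Teig hh i, hh.eigenvectorBasis.repr_apply_apply]
  rw [smul_smul, mul_comm]

lemma inner_eig_eigSp {μ : ℝ} {v : EuclideanSpace ℂ (Fin n)} (hv : v ∈ eigSp S μ)
    (i : Fin n) (hi : hh.eigenvalues i ≠ μ) :
    (inner ℂ (hh.eigenvectorBasis i) v : ℂ) = 0 := by
  have hsymm : (Matrix.toEuclideanLin S).IsSymmetric := Matrix.isHermitian_iff_isSymmetric.mp hh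
  have h1 : (inner ℂ (hh.eigenvectorBasis i) (Matrix.toEuclideanLin S v) : ℂ)
      = (μ : ℂ) * inner ℂ (hh.eigenvectorBasis i) v := by
    rw [mem_eigSp.mp hv, inner_smul_right]
  have h2 : (inner ℂ (hh.eigenvectorBasis i) (Matrix.toEuclideanLin S v) : ℂ)
      = ((hh.eigenvalues i : ℝ) : ℂ) * inner ℂ (hh.eigenvectorBasis i) v := by
    rw [← hsymm (hh.eigenvectorBasis i) v, Teig hh i, inner_smul_left]
    simp
  have h3 : (((hh.eigenvalues i : ℝ) : ℂ) - (μ : ℂ)) * inner ℂ (hh.eigenvectorBasis i) v = 0 := by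
    rw [sub_mul, ← h1, ← h2, sub_self]
  rcases mul_eq_zero.mp h3 with h | h
  · exfalso; apply hi
    have := sub_eq_zero.mp h
    exact_mod_cast this
  · exact h

lemma eigSp_eq_span (μ : ℝ) :
    eigSp S μ = Submodule.span ℂ
      (Set.range fun i : {i : Fin n // hh.eigenvalues i = μ} => hh.eigenvectorBasis i.1) := by
  apply le_antisymm
  · intro v hv
    rw [← hh.eigenvectorBasis.sum_repr v]
    refine Submodule.sum_mem _ fun i _ => ?_
    by_cases hi : hh.eigenvalues i = μ
    · exact Submodule.smul_mem _ _ (Submodule.subset_span ⟨⟨i, hi⟩, rfl⟩)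
    · rw [hh.eigenvectorBasis.repr_apply_apply, inner_eig_eigSp hh hv i hi, zero_smul]
      exact Submodule.zero_mem _
  · rw [Submodule.span_le]
    rintro _ ⟨⟨i, hi⟩, rfl⟩
    rw [SetLike.mem_coe, mem_eigSp, Teig hh i, hi]

lemma card_eigSp (μ : ℝ) :
    Fintype.card {i : Fin n // hh.eigenvalues i = μ} = Module.finrank ℂ (eigSp S μ) := by
  rw [eigSp_eq_span hh μ]
  exact (finrank_span_eq_card ((hh.eigenvectorBasis.orthonormal.comp _
    Subtype.val_injective).linearIndependent)).symm
end spec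

section entry
variable {n : ℕ} (S : Matrix (Fin n) (Fin n) ℂ)

lemma inner_single_T (x y : Fin n) :
    (inner ℂ (EuclideanSpace.single x (1:ℂ))
      (Matrix.toEuclideanLin S (EuclideanSpace.single y (1:ℂ))) : ℂ) = S x y := by
  rw [EuclideanSpace.inner_single_left]
  simp only [_root_.map_one, one_mul, Matrix.toEuclideanLin_apply]
  show (S *ᵥ (WithLp.equiv 2 (Fin n → ℂ)) (EuclideanSpace.single y (1:ℂ))) x = S x y
  have : (WithLp.equiv 2 (Fin n → ℂ)) (EuclideanSpace.single y (1:ℂ)) = Pi.single y 1 := by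
    ext z; simp [EuclideanSpace.single_apply, Pi.single_apply]
  rw [this]
  simp [Matrix.mulVec_single]

lemma inner_single_single (x y : Fin n) :
    (inner ℂ (EuclideanSpace.single x (1:ℂ)) (EuclideanSpace.single y (1:ℂ)) : ℂ)
      = if x = y then 1 else 0 := by
  rw [EuclideanSpace.inner_single_left]
  simp [EuclideanSpace.single_apply, eq_comm]

variable {S}

lemma quad_re (hh : S.IsHermitian) (v : EuclideanSpace ℂ (Fin n)) :
    (inner ℂ v (Matrix.toEuclideanLin S v) : ℂ).re
      = ∑ i, hh.eigenvalues i * Complex.normSq (inner ℂ (hh.eigenvectorBasis i) v : ℂ) := by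
  rw [Texpand hh v, inner_sum]
  rw [Complex.re_sum]
  refine Finset.sum_congr rfl fun i _ => ?_
  rw [inner_smul_right]
  have : (inner ℂ v (hh.eigenvectorBasis i) : ℂ)
      = (starRingEnd ℂ) (inner ℂ (hh.eigenvectorBasis i) v : ℂ) := (inner_conj_symm _ _).symm
  rw [this]
  set z := (inner ℂ (hh.eigenvectorBasis i) v : ℂ)
  have : z * (starRingEnd ℂ) z = (Complex.normSq z : ℂ) := Complex.mul_conj z
  rw [mul_assoc, this]
  simp [Complex.ofReal_mul]

lemma tau0_neg {A : Matrix (Fin n) (Fin n) ℂ} (hn : 2 ≤ n) (hA : IsTournament A)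
    (hS : S = Complex.I • (A - Aᵀ)) (hh : S.IsHermitian)
    {τ0 : ℝ} (hlow : ∀ i, τ0 ≤ hh.eigenvalues i) : τ0 < 0 := by
  by_contra hcon
  push_neg at hcon
  set x0 : Fin n := ⟨0, by omega⟩
  set x1 : Fin n := ⟨1, by omega⟩
  have hne : x0 ≠ x1 := by simp [x0, x1, Fin.ext_iff]
  have hS01 : S x0 x1 = Complex.I ∨ S x0 x1 = -Complex.I := by
    rcases tourn_off A hA hne with ⟨h1, h2⟩ | ⟨h1, h2⟩
    · left; rw [seidel_entry A hS, h1, h2]; ring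
    · right; rw [seidel_entry A hS, h1, h2]; ring
  have hnormSq : Complex.normSq (S x0 x1) = 1 := by
    rcases hS01 with h | h <;> simp [h]
  have hS10 : S x1 x0 = (starRingEnd ℂ) (S x0 x1) := by
    have := congrFun (congrFun hh.symm x1) x0
    rw [this]; simp [Matrix.conjTranspose_apply]
  set c : ℂ := -(starRingEnd ℂ) (S x0 x1)
  set v : EuclideanSpace ℂ (Fin n) :=
    EuclideanSpace.single x0 (1:ℂ) + c • EuclideanSpace.single x1 (1:ℂ)
  have hTv : (inner ℂ v (Matrix.toEuclideanLin S v) : ℂ) = -2 := by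
    have hdiag : ∀ z : Fin n, S z z = 0 := by
      intro z; rw [seidel_entry A hS]; ring
    simp only [v, map_add, _root_.map_smul]
    rw [inner_add_left, inner_add_right, inner_add_right, inner_smul_left, inner_smul_right,
        inner_smul_left, inner_smul_right]
    rw [inner_single_T, inner_single_T, inner_single_T, inner_single_T, hdiag, hdiag, hS10]
    have h1 : c * S x0 x1 = -1 := by
      simp only [c, neg_mul]
      rw [mul_comm, Complex.mul_conj, hnormSq]; norm_num
    have h2 : (starRingEnd ℂ) c * (starRingEnd ℂ) (S x0 x1) = -1 := by
      rw [← _root_.map_mul, h1]; simp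
    rw [h1]
    ring_nf
    rw [h2]; ring
  have hge : 0 ≤ (inner ℂ v (Matrix.toEuclideanLin S v) : ℂ).re := by
    rw [quad_re hh v]
    exact Finset.sum_nonneg fun i _ => mul_nonneg (le_trans hcon (hlow i)) (Complex.normSq_nonneg _)
  rw [hTv] at hge
  norm_num at hge

section construct
variable {n : ℕ} {S : Matrix (Fin n) (Fin n) ℂ} (hh : S.IsHermitian)

lemma sum_c_smul (τ0 : ℝ) (hτ0 : (τ0:ℂ) ≠ 0) (w : EuclideanSpace ℂ (Fin n)) :
    ∑ i, (((1:ℂ) - ((hh.eigenvalues i : ℝ) : ℂ)/(τ0:ℂ)) * (inner ℂ (hh.eigenvectorBasis i) w : ℂ))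
        • hh.eigenvectorBasis i
      = w - ((τ0:ℂ))⁻¹ • Matrix.toEuclideanLin S w := by
  have : ∀ i : Fin n,
      (((1:ℂ) - ((hh.eigenvalues i : ℝ) : ℂ)/(τ0:ℂ)) * (inner ℂ (hh.eigenvectorBasis i) w : ℂ))
        • hh.eigenvectorBasis i
      = (inner ℂ (hh.eigenvectorBasis i) w : ℂ) • hh.eigenvectorBasis i
        - ((τ0:ℂ))⁻¹ • ((((hh.eigenvalues i : ℝ):ℂ) * (inner ℂ (hh.eigenvectorBasis i) w : ℂ))
            • hh.eigenvectorBasis i) := by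
    intro i
    rw [smul_smul, ← sub_smul]
    congr 1
    field_simp
  rw [Finset.sum_congr rfl fun i _ => this i, Finset.sum_sub_distrib, ← Finset.smul_sum,
      ← Texpand hh w]
  congr 1
  have := hh.eigenvectorBasis.sum_repr w
  conv_rhs => rw [← this]
  refine Finset.sum_congr rfl fun i _ => ?_
  rw [hh.eigenvectorBasis.repr_apply_apply]

lemma construct_rep (τ0 : ℝ) (hτ0 : τ0 < 0) (hlow : ∀ i, τ0 ≤ hh.eigenvalues i)
    {d : ℕ} (g : Fin d ≃ {i : Fin n // hh.eigenvalues i ≠ τ0}) :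
    ∃ φ : Fin n → EuclideanSpace ℂ (Fin d),
      ∀ x y, (inner ℂ (φ x) (φ y) : ℂ) = (if x = y then 1 else 0) - S x y / (τ0 : ℂ) := by
  have hτ0' : (τ0 : ℂ) ≠ 0 := by exact_mod_cast hτ0.ne
  set lam := hh.eigenvalues with hlam
  set e := hh.eigenvectorBasis with he
  set c : Fin n → ℝ := fun i => 1 - lam i / τ0 with hc
  have hcnn : ∀ i, 0 ≤ c i := by
    intro i
    rw [hc, sub_nonneg, div_le_one_iff]
    exact Or.inr (Or.inr ⟨hτ0, hlow i⟩)
  refine ⟨fun x => (WithLp.toLp 2 (fun k => ((Real.sqrt (c (g k).1) : ℝ) : ℂ) *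
      (starRingEnd ℂ) (e ((g k).1) x)) : EuclideanSpace ℂ (Fin d)), fun x y => ?_⟩
  rw [PiLp.inner_apply]
  have hterm : ∀ k : Fin d,
      (inner ℂ (((Real.sqrt (c (g k).1) : ℝ) : ℂ) * (starRingEnd ℂ) (e ((g k).1) x))
        (((Real.sqrt (c (g k).1) : ℝ) : ℂ) * (starRingEnd ℂ) (e ((g k).1) y)) : ℂ)
      = ((c (g k).1 : ℝ) : ℂ) * (e ((g k).1) x) * (starRingEnd ℂ) (e ((g k).1) y) := by
    intro k
    rw [RCLike.inner_apply']
    rw [_root_.map_mul, RingHomInvPair.comp_apply_eq]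
    have : ((Real.sqrt (c (g k).1) : ℝ) : ℂ) * ((Real.sqrt (c (g k).1) : ℝ) : ℂ)
        = ((c (g k).1 : ℝ) : ℂ) := by
      rw [← Complex.ofReal_mul, Real.mul_self_sqrt (hcnn _)]
    have hconj : (starRingEnd ℂ) (((Real.sqrt (c (g k).1) : ℝ) : ℂ)) =
        ((Real.sqrt (c (g k).1) : ℝ) : ℂ) := Complex.conj_ofReal _
    rw [hconj]
    calc ((Real.sqrt (c (g k).1) : ℝ) : ℂ) * (e ((g k).1) x) *
          (((Real.sqrt (c (g k).1) : ℝ) : ℂ) * (starRingEnd ℂ) (e ((g k).1) y))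
        = (((Real.sqrt (c (g k).1) : ℝ) : ℂ) * ((Real.sqrt (c (g k).1) : ℝ) : ℂ)) *
            (e ((g k).1) x) * (starRingEnd ℂ) (e ((g k).1) y) := by ring
      _ = _ := by rw [this]
  rw [Finset.sum_congr rfl fun k _ => hterm k]
  set F : Fin n → ℂ := fun i => ((c i : ℝ) : ℂ) * (e i x) * (starRingEnd ℂ) (e i y) with hF
  have h1 : ∑ k : Fin d, ((c ((g k).1) : ℝ) : ℂ) * (e ((g k).1) x) *
      (starRingEnd ℂ) (e ((g k).1) y) = ∑ i : {i : Fin n // lam i ≠ τ0}, F i.1 :=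
    Equiv.sum_comp g (fun i => F i.1)
  have h2 : ∑ i : {i : Fin n // lam i ≠ τ0}, F i.1 = ∑ i : Fin n, F i := by
    have := Fintype.sum_subtype_add_sum_subtype (fun i : Fin n => lam i ≠ τ0) F
    rw [← this]
    have hz : ∑ i : {i : Fin n // ¬ lam i ≠ τ0}, F i.1 = 0 := by
      apply Finset.sum_eq_zero
      intro i _
      have : lam i.1 = τ0 := not_not.mp i.2
      have : c i.1 = 0 := by rw [hc]; simp [this, div_self hτ0.ne]
      simp [hF, this]
    rw [hz, add_zero]
  rw [h1, h2]
  have h3 : ∀ i, F i = (((c i : ℝ) : ℂ) *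
      (inner ℂ (e i) (EuclideanSpace.single y (1:ℂ)) : ℂ)) *
      (inner ℂ (EuclideanSpace.single x (1:ℂ)) (e i) : ℂ) := by
    intro i
    rw [EuclideanSpace.inner_single_right, EuclideanSpace.inner_single_left]
    simp only [one_mul, _root_.map_one]
    rw [hF]; ring
  rw [Finset.sum_congr rfl fun i _ => h3 i]
  have h4 : ∑ i : Fin n, (((c i : ℝ) : ℂ) *
      (inner ℂ (e i) (EuclideanSpace.single y (1:ℂ)) : ℂ)) *
      (inner ℂ (EuclideanSpace.single x (1:ℂ)) (e i) : ℂ)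
      = (inner ℂ (EuclideanSpace.single x (1:ℂ))
          (∑ i, (((c i : ℝ) : ℂ) * (inner ℂ (e i) (EuclideanSpace.single y (1:ℂ)) : ℂ)) • e i) : ℂ) := by
    rw [inner_sum]
    refine Finset.sum_congr rfl fun i _ => ?_
    rw [inner_smul_right]
  rw [h4]
  have h5 : ∑ i, (((c i : ℝ) : ℂ) * (inner ℂ (e i) (EuclideanSpace.single y (1:ℂ)) : ℂ)) • e i
      = EuclideanSpace.single y (1:ℂ)
        - ((τ0:ℂ))⁻¹ • Matrix.toEuclideanLin S (EuclideanSpace.single y (1:ℂ)) := by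
    rw [← sum_c_smul hh τ0 hτ0']
    refine Finset.sum_congr rfl fun i _ => ?_
    congr 2
    rw [hc]
    push_cast
    ring
  rw [h5, inner_sub_right, inner_smul_right, inner_single_single, inner_single_T]
  rw [div_eq_inv_mul]
end construct

section lower
variable {n : ℕ} {S A : Matrix (Fin n) (Fin n) ℂ}

lemma toEuclideanLin_entry (S : Matrix (Fin n) (Fin n) ℂ) (v : EuclideanSpace ℂ (Fin n))
    (x : Fin n) : (Matrix.toEuclideanLin S v) x = ∑ y, S x y * v y := by
  rw [Matrix.toEuclideanLin_apply]
  rfl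

noncomputable def psiMap {d : ℕ} (φ : Fin n → EuclideanSpace ℂ (Fin d)) :
    EuclideanSpace ℂ (Fin n) →ₗ[ℂ] EuclideanSpace ℂ (Fin d) where
  toFun v := ∑ x, v x • φ x
  map_add' v w := by
    simp only
    rw [← Finset.sum_add_distrib]
    refine Finset.sum_congr rfl fun x _ => ?_
    have : (v + w) x = v x + w x := rfl
    rw [this, add_smul]
  map_smul' c v := by
    simp only [RingHom.id_apply]
    rw [Finset.smul_sum]
    refine Finset.sum_congr rfl fun x _ => ?_
    have : (c • v) x = c * v x := rfl
    rw [this, mul_smul]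

lemma gram_entry (hA : IsTournament A) (hS : S = Complex.I • (A - Aᵀ))
    {d : ℕ} {α : ℂ} {φ : Fin n → EuclideanSpace ℂ (Fin d)}
    (hrep : IsRepresentation A α φ) (x y : Fin n) :
    (inner ℂ (φ x) (φ y) : ℂ)
      = (if x = y then 1 - (α.re:ℂ) else 0) + (α.re:ℂ) + (α.im:ℂ) * S x y := by
  by_cases hxy : x = y
  · subst hxy
    rw [if_pos rfl, inner_self_eq_norm_sq_to_K, hrep.2.1 x, seidel_entry A hS]
    push_cast
    ring
  · rw [if_neg hxy, seidel_entry A hS]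
    rcases tourn_off A hA hxy with ⟨h1, h2⟩ | ⟨h1, h2⟩
    · rw [(hrep.2.2 x y hxy).1 h1, h1, h2]
      have h3 : (0:ℂ) + (α.re:ℂ) + (α.im:ℂ) * (Complex.I * (1 - 0))
          = (α.re:ℂ) + (α.im:ℂ) * Complex.I := by ring
      rw [h3, Complex.re_add_im]
    · rw [(hrep.2.2 x y hxy).2 h2, h1, h2]
      rw [Complex.ext_iff]
      constructor <;> simp

lemma inner_phi_psi (hA : IsTournament A) (hS : S = Complex.I • (A - Aᵀ))
    {d : ℕ} {α : ℂ} {φ : Fin n → EuclideanSpace ℂ (Fin d)}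
    (hrep : IsRepresentation A α φ) (v : EuclideanSpace ℂ (Fin n)) (x : Fin n) :
    (inner ℂ (φ x) (psiMap φ v) : ℂ)
      = (1 - (α.re:ℂ)) * v x + (α.re:ℂ) * (∑ y, v y)
        + (α.im:ℂ) * ((Matrix.toEuclideanLin S v) x) := by
  show (inner ℂ (φ x) (∑ y, v y • φ y) : ℂ) = _
  rw [inner_sum]
  have : ∀ y, (inner ℂ (φ x) (v y • φ y) : ℂ) = v y * inner ℂ (φ x) (φ y) := fun y =>
    inner_smul_right _ _ _
  rw [Finset.sum_congr rfl fun y _ => this y,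
      Finset.sum_congr rfl fun y _ => by rw [gram_entry hA hS hrep x y]]
  rw [toEuclideanLin_entry]
  have expand : ∀ y, v y * ((if x = y then 1 - (α.re:ℂ) else 0) + (α.re:ℂ) + (α.im:ℂ) * S x y)
      = v y * (if x = y then 1 - (α.re:ℂ) else 0) + (α.re:ℂ) * v y
        + (α.im:ℂ) * (S x y * v y) := fun y => by ring
  rw [Finset.sum_congr rfl fun y _ => expand y, Finset.sum_add_distrib, Finset.sum_add_distrib,
      ← Finset.mul_sum, ← Finset.mul_sum]
  congr 1
  congr 1
  simp [mul_ite, Finset.sum_ite_eq, mul_comm]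
end lower

noncomputable def jvec (n : ℕ) : EuclideanSpace ℂ (Fin n) := WithLp.toLp 2 (fun _ => 1)

section lower2
variable {n : ℕ} {S A : Matrix (Fin n) (Fin n) ℂ}

lemma sum_eq_zero_of_mem_perp {v : EuclideanSpace ℂ (Fin n)} :
    v ∈ (Submodule.span ℂ {jvec n})ᗮ ↔ (∑ y, v y) = 0 := by
  have hinnerjv : (inner ℂ (jvec n) v : ℂ) = ∑ y, v y := by
    rw [PiLp.inner_apply]
    refine Finset.sum_congr rfl fun y _ => ?_
    rw [RCLike.inner_apply']
    show (starRingEnd ℂ) (jvec n y) * v y = v y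
    simp [jvec]
  rw [Submodule.mem_orthogonal, ← hinnerjv]
  constructor
  · intro h; exact h (jvec n) (Submodule.mem_span_singleton_self (jvec n))
  · intro h u hu
    obtain ⟨c, rfl⟩ := Submodule.mem_span_singleton.mp hu
    rw [inner_smul_left, h, mul_zero]

lemma rep_lower (hn : 2 ≤ n) (hA : IsTournament A) (hS : S = Complex.I • (A - Aᵀ))
    (τ0 : ℝ)
    (hnb : ∀ μ : ℝ, μ < τ0 → eigSp S μ = ⊥)
    (hmain : ((eigSp S τ0).orthogonalProjectionOnto
      (WithLp.toLp 2 (fun _ => 1)) : EuclideanSpace ℂ (Fin n)) ≠ 0)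
    (hm : 1 < Module.finrank ℂ (eigSp S τ0))
    {d : ℕ} (hd : Representable A d) :
    n - Module.finrank ℂ (eigSp S τ0) ≤ d := by
  obtain ⟨α, φ, hrep⟩ := hd
  have hb : 0 < α.im := hrep.1
  have hb' : ((α.im : ℝ) : ℂ) ≠ 0 := by exact_mod_cast hb.ne'
  have hj0 : jvec n ≠ 0 := by
    intro h
    have := congrFun (congrArg WithLp.ofLp h) ⟨0, by omega⟩
    exact one_ne_zero this
  have hmain' : ((eigSp S τ0).orthogonalProjectionOnto (jvec n) : EuclideanSpace ℂ (Fin n)) ≠ 0 :=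
    hmain
  have hfinE : Module.finrank ℂ (EuclideanSpace ℂ (Fin n)) = n := finrank_euclideanSpace_fin
  have hfinP : Module.finrank ℂ
      ((Submodule.span ℂ {jvec n})ᗮ) = n - 1 := by
    have h1 := Submodule.finrank_add_finrank_orthogonal
      (Submodule.span ℂ {jvec n})
    rw [finrank_span_singleton hj0, hfinE] at h1
    omega
  -- kernel ∩ perp is in eigenspace of μ
  have hKP : LinearMap.ker (psiMap φ) ⊓
      (Submodule.span ℂ {jvec n})ᗮ
      ≤ eigSp S (-(1 - α.re)/α.im) := by
    rintro v ⟨hvK, hvP⟩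
    have hv0 : psiMap φ v = 0 := hvK
    have hvs : (∑ y, v y) = 0 := sum_eq_zero_of_mem_perp.mp hvP
    rw [mem_eigSp]
    ext x
    have h0 := inner_phi_psi hA hS hrep v x
    rw [hv0, inner_zero_right, hvs, mul_zero, add_zero] at h0
    show (Matrix.toEuclideanLin S v) x = ((-(1 - α.re)/α.im : ℝ):ℂ) * v x
    have him : ((α.im : ℝ):ℂ) * (Matrix.toEuclideanLin S v) x = -(1 - (α.re:ℂ)) * v x := by
      rw [← neg_eq_of_add_eq_zero_right h0.symm]; ring
    have h2 : (Matrix.toEuclideanLin S v) x = (-(1 - (α.re:ℂ)) / (α.im:ℂ)) * v x := by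
      field_simp at him ⊢
      linear_combination him
    rw [h2]
    congr 1
    push_cast
    ring
  -- there is a nonzero vector in eigSp τ0 ⊓ perp
  have hW0 : 1 ≤ Module.finrank ℂ ((eigSp S τ0) ⊓
      (Submodule.span ℂ {jvec n})ᗮ :
      Submodule ℂ (EuclideanSpace ℂ (Fin n))) := by
    have h1 := Submodule.finrank_sup_add_finrank_inf_eq (eigSp S τ0)
      (Submodule.span ℂ {jvec n})ᗮ
    have h2 : Module.finrank ℂ ((eigSp S τ0) ⊔
        (Submodule.span ℂ {jvec n})ᗮ :
        Submodule ℂ (EuclideanSpace ℂ (Fin n))) ≤ n :=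
      le_trans (Submodule.finrank_le _) (le_of_eq hfinE)
    omega
  obtain ⟨u, huW, hu0⟩ : ∃ u ∈ (eigSp S τ0) ⊓
      (Submodule.span ℂ {jvec n})ᗮ, u ≠ 0 := by
    apply Submodule.exists_mem_ne_zero_of_ne_bot
    intro h
    rw [h, finrank_bot] at hW0
    omega
  have husum : (∑ y, u y) = 0 := sum_eq_zero_of_mem_perp.mp huW.2
  have huT : ∀ x, (Matrix.toEuclideanLin S u) x = ((τ0:ℝ):ℂ) * u x := by
    intro x
    rw [mem_eigSp.mp huW.1]
    rfl
  have hquad : (inner ℂ (psiMap φ u) (psiMap φ u) : ℂ)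
      = (((1 - α.re) + α.im * τ0 : ℝ):ℂ) * ∑ x, (Complex.normSq (u x) : ℂ) := by
    have h1 : (inner ℂ (psiMap φ u) (psiMap φ u) : ℂ)
        = ∑ x, (starRingEnd ℂ) (u x) * (inner ℂ (φ x) (psiMap φ u) : ℂ) := by
      have h2 : psiMap φ u = ∑ x, u x • φ x := rfl
      nth_rewrite 1 [h2]
      rw [sum_inner]
      exact Finset.sum_congr rfl fun x _ => by rw [inner_smul_left]
    rw [h1, Finset.mul_sum]
    refine Finset.sum_congr rfl fun x _ => ?_
    rw [inner_phi_psi hA hS hrep u x, husum, huT x, mul_zero, add_zero]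
    rw [← Complex.mul_conj (u x)]
    push_cast
    ring
  have hsumpos : 0 < ∑ x, Complex.normSq (u x) := by
    have hx : ∃ x, u x ≠ 0 := by
      by_contra h
      push_neg at h
      exact hu0 (by ext x; exact h x)
    obtain ⟨x, hx⟩ := hx
    exact Finset.sum_pos' (fun y _ => Complex.normSq_nonneg _)
      ⟨x, Finset.mem_univ x, Complex.normSq_pos.mpr hx⟩
  have hC : 0 ≤ (1 - α.re) + α.im * τ0 := by
    by_contra h
    push_neg at h
    have h1 : 0 ≤ (inner ℂ (psiMap φ u) (psiMap φ u) : ℂ).re := by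
      have := @inner_self_nonneg ℂ _ _ _ _ (psiMap φ u)
      rwa [RCLike.re_to_complex] at this
    rw [hquad] at h1
    have h2 : ((((1 - α.re) + α.im * τ0 : ℝ):ℂ) * ∑ x, (Complex.normSq (u x) : ℂ)).re
        = ((1 - α.re) + α.im * τ0) * ∑ x, Complex.normSq (u x) := by
      rw [← Complex.ofReal_sum, ← Complex.ofReal_mul]
      exact Complex.ofReal_re _
    rw [h2] at h1
    nlinarith
  have hμle : -(1 - α.re)/α.im ≤ τ0 := by
    rw [div_le_iff₀ hb]
    nlinarith
  -- finrank bound on ker ⊓ perp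
  have hKPle : Module.finrank ℂ ((LinearMap.ker (psiMap φ)) ⊓
      (Submodule.span ℂ {jvec n})ᗮ :
      Submodule ℂ (EuclideanSpace ℂ (Fin n))) ≤ Module.finrank ℂ (eigSp S τ0) - 1 := by
    rcases lt_or_eq_of_le hμle with hlt | heq
    · have hbot : (LinearMap.ker (psiMap φ)) ⊓
          (Submodule.span ℂ {jvec n})ᗮ = ⊥ := by
        rw [← le_bot_iff, ← hnb _ hlt]
        exact hKP
      rw [hbot, finrank_bot]
      omega
    · have hKPW : (LinearMap.ker (psiMap φ)) ⊓
          (Submodule.span ℂ {jvec n})ᗮ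
          ≤ (eigSp S τ0) ⊓
          (Submodule.span ℂ {jvec n})ᗮ := by
        rw [← heq]
        exact le_inf hKP inf_le_right
      have hWle : Module.finrank ℂ ((eigSp S τ0) ⊓
          (Submodule.span ℂ {jvec n})ᗮ :
          Submodule ℂ (EuclideanSpace ℂ (Fin n))) ≤ Module.finrank ℂ (eigSp S τ0) - 1 := by
        by_contra h
        push_neg at h
        have hgem : Module.finrank ℂ (eigSp S τ0) ≤ Module.finrank ℂ ((eigSp S τ0) ⊓
            (Submodule.span ℂ {jvec n})ᗮ :
            Submodule ℂ (EuclideanSpace ℂ (Fin n))) := by omega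
        have heqW : (eigSp S τ0) ⊓
            (Submodule.span ℂ {jvec n})ᗮ = eigSp S τ0 :=
          Submodule.eq_of_le_of_finrank_le inf_le_left hgem
        have hsub : eigSp S τ0 ≤
            (Submodule.span ℂ {jvec n})ᗮ := by
          rw [← heqW]; exact inf_le_right
        apply hmain'
        have hjperp : jvec n ∈ (eigSp S τ0)ᗮ := by
          rw [Submodule.mem_orthogonal]
          intro w hw
          have hwP := hsub hw
          rw [Submodule.mem_orthogonal] at hwP
          have := hwP _ (Submodule.mem_span_singleton_self _)
          rw [← inner_conj_symm, this, map_zero]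
        rw [Submodule.orthogonalProjectionOnto_eq_zero_iff.mpr hjperp]
        rfl
      exact le_trans (Submodule.finrank_mono hKPW) hWle
  -- conclude
  have hKle : Module.finrank ℂ (LinearMap.ker (psiMap φ) :
      Submodule ℂ (EuclideanSpace ℂ (Fin n))) ≤ Module.finrank ℂ (eigSp S τ0) := by
    have h1 := Submodule.finrank_sup_add_finrank_inf_eq (LinearMap.ker (psiMap φ))
      (Submodule.span ℂ {jvec n})ᗮ
    have h2 : Module.finrank ℂ ((LinearMap.ker (psiMap φ)) ⊔
        (Submodule.span ℂ {jvec n})ᗮ :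
        Submodule ℂ (EuclideanSpace ℂ (Fin n))) ≤ n :=
      le_trans (Submodule.finrank_le _) (le_of_eq hfinE)
    omega
  have hrn := LinearMap.finrank_range_add_finrank_ker (psiMap φ)
  rw [hfinE] at hrn
  have hrle : Module.finrank ℂ (LinearMap.range (psiMap φ)) ≤ d := by
    have := Submodule.finrank_le (LinearMap.range (psiMap φ))
    rwa [finrank_euclideanSpace_fin] at this
  omega
end lower2


/-- tournament of Type (2): if the smallest eigenvalue `τ₁` of the Seidel
matrix is main (`β₁ ≠ 0`) and has multiplicity `m₁ > 1`, then `Rep(G) = n − m₁`,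
realized with angle `α = −i/τ₁`. -/

theorem repDim_type_two {n s : ℕ} (hn : 2 ≤ n)
    (A : Matrix (Fin n) (Fin n) ℂ) (hA : IsTournament A)
    (S : Matrix (Fin n) (Fin n) ℂ) (hS : S = Complex.I • (A - Aᵀ))
    (hs : 0 < s) (τ : Fin s → ℝ) (hτ : StrictMono τ)
    (heig : ∀ μ : ℝ, eigSp S μ ≠ ⊥ ↔ ∃ i, τ i = μ)
    (hβ1 : mainAngle S (τ ⟨0, hs⟩) ≠ 0)
    (hm1 : 1 < eigMult S (τ ⟨0, hs⟩)) :
    RepDim A = n - eigMult S (τ ⟨0, hs⟩) ∧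
      ∃ φ : Fin n → EuclideanSpace ℂ (Fin (n - eigMult S (τ ⟨0, hs⟩))),
        IsRepresentation A (-Complex.I / ((τ ⟨0, hs⟩ : ℝ) : ℂ)) φ := by

  have hherm : S.IsHermitian := seidel_herm A hA hS
  have hlow : ∀ i, τ ⟨0, hs⟩ ≤ hherm.eigenvalues i := by
    intro i
    have hne : eigSp S (hherm.eigenvalues i) ≠ ⊥ := by
      rw [Submodule.ne_bot_iff]
      exact ⟨hherm.eigenvectorBasis i, mem_eigSp.mpr (Teig hherm i),
        hherm.eigenvectorBasis.orthonormal.ne_zero i⟩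
    obtain ⟨k, hk⟩ := (heig _).mp hne
    rw [← hk]
    exact hτ.monotone (by simp [Fin.le_def])
  have hτ0 : τ ⟨0, hs⟩ < 0 := tau0_neg hn hA hS hherm hlow
  have hnb : ∀ μ : ℝ, μ < τ ⟨0, hs⟩ → eigSp S μ = ⊥ := by
    intro μ hμ
    by_contra h
    obtain ⟨k, hk⟩ := (heig μ).mp h
    have h2 : τ ⟨0, hs⟩ ≤ τ k := hτ.monotone (by simp [Fin.le_def])
    rw [hk] at h2
    linarith
  have hmain : ((eigSp S (τ ⟨0, hs⟩)).orthogonalProjectionOnto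
      (WithLp.toLp 2 (fun _ => 1)) : EuclideanSpace ℂ (Fin n)) ≠ 0 := by
    intro h
    apply hβ1
    unfold mainAngle
    rw [h, norm_zero, mul_zero]
  have hmlen : eigMult S (τ ⟨0, hs⟩) ≤ n := by
    have := Submodule.finrank_le (eigSp S (τ ⟨0, hs⟩))
    rwa [finrank_euclideanSpace_fin] at this
  have hcard : Fintype.card {i : Fin n // hherm.eigenvalues i = τ ⟨0, hs⟩}
      = eigMult S (τ ⟨0, hs⟩) := card_eigSp hherm _
  have hcard2 : Fintype.card {i : Fin n // hherm.eigenvalues i ≠ τ ⟨0, hs⟩}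
      = n - eigMult S (τ ⟨0, hs⟩) := by
    rw [Fintype.card_subtype_compl, hcard, Fintype.card_fin]
  obtain ⟨φ, hφ⟩ := construct_rep hherm (τ ⟨0, hs⟩) hτ0 hlow
    (Fintype.equivFinOfCardEq hcard2).symm
  have hdiag : ∀ x, S x x = 0 := fun x => by rw [seidel_entry A hS]; ring
  have hrep : IsRepresentation A (-Complex.I / ((τ ⟨0, hs⟩ : ℝ) : ℂ)) φ := by
    refine ⟨?_, ?_, ?_⟩
    · have him : (-Complex.I / ((τ ⟨0, hs⟩ : ℝ) : ℂ)).im = (-1) / τ ⟨0, hs⟩ := by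
        rw [Complex.div_ofReal_im]
        simp
      rw [him, neg_div, ← div_neg]
      exact div_pos one_pos (neg_pos.mpr hτ0)
    · intro x
      have h := hφ x x
      rw [if_pos rfl, hdiag x, zero_div, sub_zero] at h
      have h3 : ‖φ x‖^2 = 1 := by
        rw [InnerProductSpace.norm_sq_eq_re_inner (𝕜 := ℂ), h]
        simp
      nlinarith [norm_nonneg (φ x)]
    · intro x y hxy
      have h := hφ x y
      rw [if_neg hxy] at h
      constructor
      · intro hxy1
        have hyx : A y x = 0 := by
          rcases tourn_off A hA hxy with ⟨h1, h2⟩ | ⟨h1, h2⟩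
          · exact h2
          · rw [h1] at hxy1; norm_num at hxy1
        rw [h, seidel_entry A hS, hxy1, hyx]
        ring
      · intro hyx1
        have hxy0 : A x y = 0 := by
          rcases tourn_off A hA hxy with ⟨h1, h2⟩ | ⟨h1, h2⟩
          · rw [h2] at hyx1; norm_num at hyx1
          · exact h1
        rw [h, seidel_entry A hS, hxy0, hyx1]
        rw [map_div₀, map_neg, Complex.conj_I, Complex.conj_ofReal]
        ring
  have hmem : Representable A (n - eigMult S (τ ⟨0, hs⟩)) := ⟨_, φ, hrep⟩
  refine ⟨?_, φ, hrep⟩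
  apply le_antisymm
  · exact Nat.sInf_le hmem
  · have hlb : ∀ b ∈ {d | Representable A d}, n - eigMult S (τ ⟨0, hs⟩) ≤ b := by
      intro b hb
      exact rep_lower hn hA hS (τ ⟨0, hs⟩) hnb hmain hm1 hb
    exact le_csInf ⟨_, hmem⟩ hlb
end entry
end

section
/- Let d be a positive integer. There is no tournament on n = 2d vertices whose Seidel matrix S = i(A − Aᵀ) has exactly the eigenvalues −θ, 0, θ with multiplicities d − 1, 2, d − 1 respectively for some θ > 0, and whose smallest eigenvalue −θ is not a main eigenvalue. -/
open Matrix
open scoped Classical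

section AuxLemmas

variable {W : Type*} [Fintype W] [DecidableEq W]

lemma mem_eigSp' {H : Matrix W W ℂ} {μ : ℝ} {x : EuclideanSpace ℂ W} :
    x ∈ eigSp H μ ↔ Matrix.toEuclideanLin H x = (μ : ℂ) • x := by
  simp [eigSp, LinearMap.mem_ker, LinearMap.sub_apply, sub_eq_zero]

lemma eigSp_ortho' {H : Matrix W W ℂ} (hH : H.IsHermitian) {μ ν : ℝ} (hμν : μ ≠ ν) :
    eigSp H μ ⟂ eigSp H ν := by
  rw [Submodule.isOrtho_iff_inner_eq]
  intro x hx y hy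
  rw [mem_eigSp'] at hx hy
  have hsym := (Matrix.isHermitian_iff_isSymmetric.mp hH) x y
  rw [hx, hy, inner_smul_left, inner_smul_right, Complex.conj_ofReal] at hsym
  have h0 : ((μ : ℂ) - ν) * (inner ℂ x y : ℂ) = 0 := by linear_combination hsym
  rcases mul_eq_zero.mp h0 with h | h
  · exact absurd (by exact_mod_cast sub_eq_zero.mp h) hμν
  · exact h

end AuxLemmas

/-- no tournament on `n = 2d` vertices has Seidel matrix with exactly the
eigenvalues `−θ, 0, θ` (`θ > 0`) of multiplicities `d − 1, 2, d − 1` such that the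
smallest eigenvalue `−θ` is not main. -/
theorem no_tournament_type_one_spectrum_with_zero {d : ℕ} (hd : 0 < d) :
    ¬ ∃ (A : Matrix (Fin (2 * d)) (Fin (2 * d)) ℂ) (θ : ℝ),
      IsTournament A ∧ 0 < θ ∧
      (∀ μ : ℝ, eigSp (Complex.I • (A - Aᵀ)) μ ≠ ⊥ ↔ (μ = -θ ∨ μ = 0 ∨ μ = θ)) ∧
      eigMult (Complex.I • (A - Aᵀ)) (-θ) = d - 1 ∧
      eigMult (Complex.I • (A - Aᵀ)) 0 = 2 ∧
      eigMult (Complex.I • (A - Aᵀ)) θ = d - 1 ∧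
      mainAngle (Complex.I • (A - Aᵀ)) (-θ) = 0 := by
  rintro ⟨A, θ, ⟨h01, hTour⟩, hθ, -, hmNeg, hmZero, hmPos, hmain⟩
  set S : Matrix (Fin (2 * d)) (Fin (2 * d)) ℂ := Complex.I • (A - Aᵀ) with hS
  set T := Matrix.toEuclideanLin S with hT
  set jj : EuclideanSpace ℂ (Fin (2 * d)) := WithLp.toLp 2 (fun _ => 1) with hjj
  -- A has "real" entries
  have hre : ∀ i j, (starRingEnd ℂ) (A i j) = A i j := by
    intro i j; rcases h01 i j with h | h <;> simp [h]
  -- S is Hermitian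
  have hherm : S.IsHermitian := by
    rw [Matrix.IsHermitian]
    ext i j
    simp only [hS, Matrix.conjTranspose_apply, Matrix.smul_apply, Matrix.sub_apply,
      Matrix.transpose_apply, smul_eq_mul, star_mul', star_sub]
    simp only [Complex.star_def, hre, Complex.conj_I]
    ring
  -- jj is orthogonal to the eigenspace of -θ
  have hjorth : jj ∈ (eigSp S (-θ))ᗮ := by
    rw [← Submodule.orthogonalProjectionOnto_eq_zero_iff]
    unfold mainAngle at hmain
    have hc : (Fintype.card (Fin (2 * d)) : ℝ) = (2 * d : ℝ) := by
      simp [Fintype.card_fin]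
    have hpos : (0 : ℝ) < Real.sqrt (Fintype.card (Fin (2 * d))) := by
      rw [hc]; apply Real.sqrt_pos.mpr; positivity
    rcases mul_eq_zero.mp hmain with h | h
    · exact absurd h (by positivity)
    · exact Submodule.coe_eq_zero.mp (norm_eq_zero.mp h)
  -- distinct eigenvalues, orthogonality of eigenspaces
  have hOrt12 : eigSp S (-θ) ⟂ eigSp S 0 := eigSp_ortho' hherm (by linarith)
  have hOrt13 : eigSp S (-θ) ⟂ eigSp S θ := eigSp_ortho' hherm (by linarith)
  have hOrt23 : eigSp S 0 ⟂ eigSp S θ := eigSp_ortho' hherm (by linarith)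
  -- the three eigenspaces span everything
  simp only [eigMult] at hmNeg hmZero hmPos
  have h12 : Module.finrank ℂ ↥(eigSp S (-θ) ⊔ eigSp S 0) = (d - 1) + 2 := by
    have h := Submodule.finrank_sup_add_finrank_inf_eq (eigSp S (-θ)) (eigSp S 0)
    rw [hOrt12.disjoint.eq_bot, finrank_bot, add_zero, hmNeg, hmZero] at h
    exact h
  have hsup : eigSp S (-θ) ⊔ eigSp S 0 ⊔ eigSp S θ = ⊤ := by
    apply Submodule.eq_top_of_finrank_eq
    have hOrt : (eigSp S (-θ) ⊔ eigSp S 0) ⟂ eigSp S θ :=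
      Submodule.isOrtho_sup_left.mpr ⟨hOrt13, hOrt23⟩
    have h := Submodule.finrank_sup_add_finrank_inf_eq (eigSp S (-θ) ⊔ eigSp S 0) (eigSp S θ)
    rw [hOrt.disjoint.eq_bot, finrank_bot, add_zero, h12, hmPos] at h
    rw [h, finrank_euclideanSpace_fin]
    omega
  -- decompose jj
  have hjmem : jj ∈ eigSp S (-θ) ⊔ eigSp S 0 ⊔ eigSp S θ := hsup ▸ Submodule.mem_top
  obtain ⟨u, hu, c, hc, hdec⟩ := Submodule.mem_sup.mp hjmem
  obtain ⟨a, ha, b, hb, hdec'⟩ := Submodule.mem_sup.mp hu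
  rw [← hdec'] at hdec
  -- a = 0
  have hab : (inner ℂ a b : ℂ) = 0 := Submodule.isOrtho_iff_inner_eq.mp hOrt12 a ha b hb
  have hac : (inner ℂ a c : ℂ) = 0 := Submodule.isOrtho_iff_inner_eq.mp hOrt13 a ha c hc
  have hbc : (inner ℂ b c : ℂ) = 0 := Submodule.isOrtho_iff_inner_eq.mp hOrt23 b hb c hc
  have haj : (inner ℂ a jj : ℂ) = 0 := (Submodule.mem_orthogonal _ _).mp hjorth a ha
  have ha0 : a = 0 := by
    rw [← hdec, inner_add_right, inner_add_right, hab, hac, add_zero, add_zero] at haj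
    exact inner_self_eq_zero.mp haj
  rw [ha0, zero_add] at hdec
  -- ⟪jj, T jj⟫ = ∑∑ S v w = 0
  have hsum : ∑ v, ∑ w, S v w = 0 := by
    simp only [hS, Matrix.smul_apply, Matrix.sub_apply, Matrix.transpose_apply, smul_eq_mul]
    calc ∑ v, ∑ w, Complex.I * (A v w - A w v)
        = Complex.I * ((∑ v, ∑ w, A v w) - ∑ v, ∑ w, A w v) := by
          simp [Finset.mul_sum, mul_sub, Finset.sum_sub_distrib]
      _ = 0 := by rw [Finset.sum_comm (f := fun v w => A w v)]; ring
  have hTapp : ∀ x : EuclideanSpace ℂ (Fin (2 * d)), ∀ v, T x v = ∑ w, S v w * x w := by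
    intro x v
    rw [hT, Matrix.toEuclideanLin_apply]
    rfl
  have hinner0 : (inner ℂ jj (T jj) : ℂ) = 0 := by
    have heq : (inner ℂ jj (T jj) : ℂ) = ∑ v, ∑ w, S v w := by
      rw [PiLp.inner_apply]
      refine Finset.sum_congr rfl fun v _ => ?_
      rw [hTapp jj v]
      simp [hjj]
    rw [heq, hsum]
  -- T jj = θ • c, so c = 0
  have hTb : T b = 0 := by
    have := mem_eigSp'.mp hb; rw [← hT] at this; simpa using this
  have hTc : T c = (θ : ℂ) • c := by
    have := mem_eigSp'.mp hc; rw [← hT] at this; simpa using this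
  have hTjj : T jj = (θ : ℂ) • c := by
    rw [← hdec, map_add, hTb, hTc, zero_add]
  have hc0 : c = 0 := by
    rw [hTjj, inner_smul_right, ← hdec, inner_add_left, hbc, zero_add] at hinner0
    rcases mul_eq_zero.mp hinner0 with h | h
    · exact absurd (by exact_mod_cast h) (ne_of_gt hθ)
    · exact inner_self_eq_zero.mp h
  -- hence T jj = 0, i.e. row sums equal column sums
  rw [hc0, smul_zero] at hTjj
  have hrow : ∀ v, ∑ w, S v w = 0 := by
    intro v
    have := hTapp jj v
    rw [hTjj] at this
    simp only [hjj, mul_one] at this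
    simpa using this.symm
  -- pick a vertex
  have hne : (0 : ℕ) < 2 * d := by omega
  set v : Fin (2 * d) := ⟨0, hne⟩
  have hrowv : ∑ w, A v w = ∑ w, A w v := by
    have := hrow v
    simp only [hS, Matrix.smul_apply, Matrix.sub_apply, Matrix.transpose_apply,
      smul_eq_mul] at this
    rw [← Finset.mul_sum] at this
    rcases mul_eq_zero.mp this with h | h
    · exact absurd h Complex.I_ne_zero
    · rw [Finset.sum_sub_distrib] at h
      linear_combination h
  -- tournament condition: row sum + column sum = 2d - 1
  have htot : ∑ w, A v w + ∑ w, A w v = (2 * d : ℂ) - 1 := by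
    have h1 : ∀ w, A v w + A w v = 1 - (if v = w then 1 else 0 : ℂ) := by
      intro w
      have := congrFun (congrFun hTour v) w
      simpa [Matrix.add_apply, Matrix.transpose_apply, Matrix.sub_apply,
        Matrix.one_apply] using this
    rw [← Finset.sum_add_distrib]
    rw [Finset.sum_congr rfl fun w _ => h1 w]
    simp [Finset.sum_sub_distrib, Finset.card_fin]
  -- row sum is a natural number k with 2k = 2d - 1 : contradiction
  have hk : ∑ w, A v w = ((Finset.univ.filter fun w => A v w = 1).card : ℂ) := by
    rw [← Finset.sum_boole]
    exact Finset.sum_congr rfl fun w _ => by rcases h01 v w with h | h <;> simp [h]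
  set k := (Finset.univ.filter fun w => A v w = 1).card with hkdef
  have h2k : ((2 * k : ℕ) : ℂ) = ((2 * d - 1 : ℕ) : ℂ) := by
    have hcast : ((2 * d - 1 : ℕ) : ℂ) = (2 * d : ℂ) - 1 := by
      push_cast [Nat.cast_sub (by omega : 1 ≤ 2 * d)]
      ring
    rw [hcast]
    push_cast
    rw [← hrowv, hk] at htot
    linear_combination htot
  have : 2 * k = 2 * d - 1 := Nat.cast_injective h2k
  omega
end
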